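/- Let L₁₁, L₁₂, L₂₁, L₂₂ ⊆ V be lines with L₁₁ ∩ L₁₂ = 0 and L₂₁ ∩ L₂₂ = 0, such that L₂₁ ∩ L₁₁ and L₂₂ ∩ L₁₁ are 1-dimensional, spanned by vectors x₁ and x₂ respectively with ⟨x₁⟩ ≠ ⟨x₂⟩, and L₂₁ ∩ L₁₂ = L₂₂ ∩ L₁₂ = 0. Let L₃₁, L₃₂ ⊆ V be further lines with L₃₁ ∩ L₃₂ = 0, with x₁ ∉ L₃₁ ∪ L₃₂ and x₂ ∉ L₃₁ ∪ L₃₂, and assume it is not the case that both L₁₁ ∩ L₃₁ ≠ 0 and L₁₁ ∩ L₃₂ ≠ 0. For i = 1, 2, 3 let Q_i = {q ∈ S²V* : q vanishes on L_{i1} and on L_{i2}}. Then Q₁ + Q₂ + Q₃ = S²V*. -/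

import Mathlib

open Module

/-- The subspace of quadratic forms on `V` vanishing on a subset `S ⊆ V`. -/
def vanishingQuadrics (k V : Type) [Field k] [AddCommGroup V] [Module k V]
    (S : Set V) : Submodule k (QuadraticForm k V) where
  carrier := {q | ∀ x ∈ S, q x = 0}
  zero_mem' := by intro x hx; simp
  add_mem' := by
    intro a b ha hb x hx
    simp [ha x hx, hb x hx]
  smul_mem' := by
    intro c q hq x hx
    simp [hq x hx]

section helpers
variable {k V : Type} [Field k] [AddCommGroup V] [Module k V] [FiniteDimensional k V]

lemma st18_mem_vanishing {S : Set V} {q : QuadraticForm k V}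
    (h : ∀ x ∈ S, q x = 0) : q ∈ vanishingQuadrics k V S := h

omit [FiniteDimensional k V] in
lemma st18_quad_eval (q : QuadraticForm k V) (s t : k) (u v : V) :
    q (s • u + t • v) = s * s * q u + t * t * q v + s * t * QuadraticMap.polar q u v := by
  have h : q (s • u + t • v)
      = QuadraticMap.polar q (s • u) (t • v) + q (s • u) + q (t • v) := by
    simp only [QuadraticMap.polar]; ring
  rw [h, QuadraticMap.polar_smul_left, QuadraticMap.polar_smul_right,
    QuadraticMap.map_smul, QuadraticMap.map_smul]
  simp only [smul_eq_mul]; ring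

lemma st18_span_pair_eq {W : Submodule k V} (hW : finrank k W = 2) {u v : V}
    (hu : u ∈ W) (hv : v ∈ W) (h : LinearIndependent k ![u, v]) :
    Submodule.span k {u, v} = W := by
  have hle : Submodule.span k {u, v} ≤ W := by
    rw [Submodule.span_le]; rintro x (rfl | rfl) <;> assumption
  have hr : Set.range ![u, v] = {u, v} := by
    simp [Matrix.range_cons, Matrix.range_empty, Set.pair_comm v u]
  have hfr : finrank k (Submodule.span k {u, v}) = 2 := by
    have := finrank_span_eq_card h
    rw [hr] at this
    simpa using this
  exact Submodule.eq_of_le_of_finrank_le hle (by rw [hW, hfr])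

lemma st18_isCompl {A B : Submodule k V} (hV : finrank k V = 4)
    (hA : finrank k A = 2) (hB : finrank k B = 2) (h : A ⊓ B = ⊥) : IsCompl A B := by
  have hsup : A ⊔ B = ⊤ := by
    apply Submodule.eq_top_of_finrank_eq
    have := Submodule.finrank_sup_add_finrank_inf_eq A B
    rw [h] at this
    simp at this
    omega
  exact ⟨disjoint_iff.mpr h, codisjoint_iff.mpr hsup⟩

lemma st18_pair_indep {x y : V} (hx : x ≠ 0) (hy : y ≠ 0)
    (hxx : Submodule.span k {x} ≠ Submodule.span k ({y} : Set V)) :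
    LinearIndependent k ![x, y] := by
  rw [LinearIndependent.pair_iff]
  intro s t hst
  by_cases ht : t = 0
  · subst ht
    refine ⟨?_, rfl⟩
    have : s • x = 0 := by simpa using hst
    rcases smul_eq_zero.mp this with h | h
    · exact h
    · exact absurd h hx
  · exfalso
    apply hxx
    have hyx : y = (-s / t) • x := by
      apply smul_right_injective V ht
      show t • y = t • ((-s / t) • x)
      rw [smul_smul, show t * (-s / t) = -s by field_simp]
      linear_combination (norm := module) hst
    rw [hyx]
    have hns : -s / t ≠ 0 := by
      intro h0
      rw [h0, zero_smul] at hyx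
      exact hy hyx
    exact (Submodule.span_singleton_smul_eq (IsUnit.mk0 _ hns) x).symm

omit [FiniteDimensional k V] in
lemma st18_split_zero {A B : Submodule k V} (hAB : A ⊓ B = ⊥) {p q : V}
    (hp : p ∈ A) (hq : q ∈ B) (h : p + q = 0) : p = 0 ∧ q = 0 := by
  have hpB : p ∈ B := by
    have : p = -q := by linear_combination (norm := module) h
    rw [this]; exact neg_mem hq
  have hp0 : p = 0 := by
    have : p ∈ A ⊓ B := ⟨hp, hpB⟩
    rw [hAB] at this; simpa using this
  refine ⟨hp0, ?_⟩
  rw [hp0, zero_add] at h; exact h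

lemma st18_dep_pair {u₁ u₂ : V} (h1 : u₁ ≠ 0) (h2 : u₂ ≠ 0)
    (h : ¬ LinearIndependent k ![u₁, u₂]) : ∃ l : k, l ≠ 0 ∧ u₂ = l • u₁ := by
  rw [LinearIndependent.pair_iff] at h
  push_neg at h
  obtain ⟨s, t, hst, hne⟩ := h
  by_cases ht : t = 0
  · subst ht
    exfalso
    have hs : s • u₁ = 0 := by simpa using hst
    rcases smul_eq_zero.mp hs with h | h
    · exact hne h rfl
    · exact h1 h
  · refine ⟨-s / t, ?_, ?_⟩
    · intro h0
      have hs : s = 0 := by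
        field_simp at h0
        simpa using h0
      subst hs
      have : t • u₂ = 0 := by simpa using hst
      rcases smul_eq_zero.mp this with h | h
      · exact ht h
      · exact h2 h
    · apply smul_right_injective V ht
      show t • u₂ = t • ((-s / t) • u₁)
      rw [smul_smul, show t * (-s / t) = -s by field_simp]
      linear_combination (norm := module) hst

lemma st18_exists_functional_one {A B : Submodule k V} (h : IsCompl A B)
    {w : V} (hw : w ∈ B) (hw0 : w ≠ 0) :
    ∃ f : V →ₗ[k] k, (∀ a ∈ A, f a = 0) ∧ f w = 1 := by
  obtain ⟨φ, hφ⟩ : ∃ φ : Module.Dual k B, φ ⟨w, hw⟩ ≠ 0 := by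
    by_contra hc
    push_neg at hc
    have := (Module.forall_dual_apply_eq_zero_iff k (⟨w, hw⟩ : B)).mp hc
    exact hw0 (by simpa [Submodule.mk_eq_zero] using this)
  set π := B.projectionOnto A h.symm with hπ
  refine ⟨(φ ⟨w, hw⟩)⁻¹ • (φ ∘ₗ π), ?_, ?_⟩
  · intro a ha
    simp [π, Submodule.projectionOnto_apply_of_mem_right h.symm ha]
  · simp [π, Submodule.projectionOnto_apply_left h.symm (⟨w, hw⟩ : B),
      inv_mul_cancel₀ hφ]

lemma st18_exists_functional_pair {A B : Submodule k V} (h : IsCompl A B)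
    (hA : finrank k A = 2) {u u' : V} (hu : u ∈ A) (hu' : u' ∈ A)
    (hind : LinearIndependent k ![u, u']) :
    ∃ g : V →ₗ[k] k, (∀ b ∈ B, g b = 0) ∧ g u = 1 ∧ g u' = 0 := by
  have hind' : LinearIndependent k ![(⟨u, hu⟩ : A), ⟨u', hu'⟩] := by
    apply LinearIndependent.of_comp A.subtype
    convert hind
    ext i
    fin_cases i <;> rfl
  have hcard : Fintype.card (Fin 2) = finrank k A := by simp [hA]
  let bA := basisOfLinearIndependentOfCardEqFinrank hind' hcard
  have hbA : ∀ i, bA i = ![(⟨u, hu⟩ : A), ⟨u', hu'⟩] i := fun i => by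
    rw [coe_basisOfLinearIndependentOfCardEqFinrank]
  set π := A.projectionOnto B h with hπ
  refine ⟨(bA.coord 0) ∘ₗ π, ?_, ?_, ?_⟩
  · intro b hb
    simp [π, Submodule.projectionOnto_apply_of_mem_right h hb]
  · have : π u = bA 0 := by
      rw [hbA 0]
      exact Submodule.projectionOnto_apply_left h (⟨u, hu⟩ : A)
    simp [this, Basis.coord_apply, Basis.repr_self]
  · have : π u' = bA 1 := by
      rw [hbA 1]
      exact Submodule.projectionOnto_apply_left h (⟨u', hu'⟩ : A)
    simp [this, Basis.coord_apply, Basis.repr_self]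

lemma st18_exists_quadric (A B : Submodule k V) (h : IsCompl A B) (hA : finrank k A = 2)
    {u₁ u₂ w₁ w₂ : V} (hu₁ : u₁ ∈ A) (hu₂ : u₂ ∈ A) (hw₁ : w₁ ∈ B) (hw₂ : w₂ ∈ B)
    (hw₁0 : w₁ ≠ 0) (hind : LinearIndependent k ![u₁, u₂]) :
    ∃ q : QuadraticForm k V, (∀ x ∈ A, q x = 0) ∧ (∀ x ∈ B, q x = 0) ∧
      q (u₁ + w₁) = 1 ∧ q (u₂ + w₂) = 0 := by
  obtain ⟨f, hfA, hfw⟩ := st18_exists_functional_one h hw₁ hw₁0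
  obtain ⟨g, hgB, hgu₁, hgu₂⟩ := st18_exists_functional_pair h hA hu₁ hu₂ hind
  refine ⟨QuadraticMap.linMulLin f g, ?_, ?_, ?_, ?_⟩
  · intro x hx; simp [QuadraticMap.linMulLin_apply, hfA x hx]
  · intro x hx; simp [QuadraticMap.linMulLin_apply, hgB x hx]
  · simp [QuadraticMap.linMulLin_apply, map_add, hfA u₁ hu₁, hfw, hgu₁, hgB w₁ hw₁]
  · simp [QuadraticMap.linMulLin_apply, map_add, hgu₂, hgB w₂ hw₂]

lemma st18_surj_on_pair (hV : finrank k V = 4) (L₁₁ L₃₁ L₃₂ : Submodule k V)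
    (h31 : finrank k L₃₁ = 2) (h32 : finrank k L₃₂ = 2) (hskew3 : L₃₁ ⊓ L₃₂ = ⊥)
    (x₁ x₂ : V)
    (hxx : Submodule.span k {x₁} ≠ Submodule.span k ({x₂} : Set V))
    (hx₁31 : x₁ ∉ L₃₁) (hx₁32 : x₁ ∉ L₃₂) (hx₂31 : x₂ ∉ L₃₁) (hx₂32 : x₂ ∉ L₃₂)
    (hL11 : Submodule.span k {x₁, x₂} = L₁₁)
    (hnotboth : ¬(L₁₁ ⊓ L₃₁ ≠ ⊥ ∧ L₁₁ ⊓ L₃₂ ≠ ⊥)) (c₁ c₂ : k) :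
    ∃ q : QuadraticForm k V, (∀ x ∈ L₃₁, q x = 0) ∧ (∀ x ∈ L₃₂, q x = 0) ∧
      q x₁ = c₁ ∧ q x₂ = c₂ := by
  have hc : IsCompl L₃₁ L₃₂ := st18_isCompl hV h31 h32 hskew3
  have htop : L₃₁ ⊔ L₃₂ = ⊤ := codisjoint_iff.mp hc.codisjoint
  obtain ⟨u₁, hu₁, w₁, hw₁, hs₁⟩ :=
    Submodule.mem_sup.mp (htop ▸ Submodule.mem_top : x₁ ∈ L₃₁ ⊔ L₃₂)
  obtain ⟨u₂, hu₂, w₂, hw₂, hs₂⟩ :=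
    Submodule.mem_sup.mp (htop ▸ Submodule.mem_top : x₂ ∈ L₃₁ ⊔ L₃₂)
  have hu₁0 : u₁ ≠ 0 := fun h => hx₁32 (by rw [← hs₁, h, zero_add]; exact hw₁)
  have hw₁0 : w₁ ≠ 0 := fun h => hx₁31 (by rw [← hs₁, h, add_zero]; exact hu₁)
  have hu₂0 : u₂ ≠ 0 := fun h => hx₂32 (by rw [← hs₂, h, zero_add]; exact hw₂)
  have hw₂0 : w₂ ≠ 0 := fun h => hx₂31 (by rw [← hs₂, h, add_zero]; exact hu₂)
  by_cases hA : LinearIndependent k ![u₁, u₂]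
  · have hA' : LinearIndependent k ![u₂, u₁] := by
      rw [LinearIndependent.pair_iff] at hA ⊢
      intro s t hst
      obtain ⟨h1, h2⟩ := hA t s (by linear_combination (norm := module) hst)
      exact ⟨h2, h1⟩
    obtain ⟨qa, hqa1, hqa2, hqa3, hqa4⟩ :=
      st18_exists_quadric L₃₁ L₃₂ hc h31 hu₁ hu₂ hw₁ hw₂ hw₁0 hA
    obtain ⟨qb, hqb1, hqb2, hqb3, hqb4⟩ :=
      st18_exists_quadric L₃₁ L₃₂ hc h31 hu₂ hu₁ hw₂ hw₁ hw₂0 hA'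
    refine ⟨c₁ • qa + c₂ • qb, ?_, ?_, ?_, ?_⟩
    · intro x hx; simp [hqa1 x hx, hqb1 x hx]
    · intro x hx; simp [hqa2 x hx, hqb2 x hx]
    · rw [← hs₁]; simp [hqa3, hqb4]
    · rw [← hs₂]; simp [hqa4, hqb3]
  · by_cases hB : LinearIndependent k ![w₁, w₂]
    · have hB' : LinearIndependent k ![w₂, w₁] := by
        rw [LinearIndependent.pair_iff] at hB ⊢
        intro s t hst
        obtain ⟨h1, h2⟩ := hB t s (by linear_combination (norm := module) hst)
        exact ⟨h2, h1⟩
      obtain ⟨qa, hqa1, hqa2, hqa3, hqa4⟩ :=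
        st18_exists_quadric L₃₂ L₃₁ hc.symm h32 hw₁ hw₂ hu₁ hu₂ hu₁0 hB
      obtain ⟨qb, hqb1, hqb2, hqb3, hqb4⟩ :=
        st18_exists_quadric L₃₂ L₃₁ hc.symm h32 hw₂ hw₁ hu₂ hu₁ hu₂0 hB'
      refine ⟨c₁ • qa + c₂ • qb, ?_, ?_, ?_, ?_⟩
      · intro x hx; simp [hqa2 x hx, hqb2 x hx]
      · intro x hx; simp [hqa1 x hx, hqb1 x hx]
      · rw [← hs₁, add_comm u₁ w₁]; simp [hqa3, hqb4]
      · rw [← hs₂, add_comm u₂ w₂]; simp [hqa4, hqb3]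
    · exfalso
      obtain ⟨l, hl, hul⟩ := st18_dep_pair hu₁0 hu₂0 hA
      obtain ⟨m, hm, hwm⟩ := st18_dep_pair hw₁0 hw₂0 hB
      by_cases hlm : l = m
      · subst hlm
        apply hxx
        have hx2 : x₂ = l • x₁ := by
          rw [← hs₁, ← hs₂, hul, hwm]
          module
        rw [hx2]
        exact (Submodule.span_singleton_smul_eq (IsUnit.mk0 l hl) x₁).symm
      · have hml : m - l ≠ 0 := sub_ne_zero.mpr (Ne.symm hlm)
        have hw1L : w₁ ∈ L₁₁ := by
          have he : (m - l) • w₁ = x₂ - l • x₁ := by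
            rw [← hs₁, ← hs₂, hul, hwm]; module
          have hmem : x₂ - l • x₁ ∈ Submodule.span k {x₁, x₂} :=
            Submodule.sub_mem _ (Submodule.subset_span (by simp))
              (Submodule.smul_mem _ _ (Submodule.subset_span (by simp)))
          have h2 : w₁ = (m - l)⁻¹ • ((m - l) • w₁) := by
            rw [smul_smul, inv_mul_cancel₀ hml, one_smul]
          rw [h2, he, ← hL11]
          exact Submodule.smul_mem _ _ hmem
        have hu1L : u₁ ∈ L₁₁ := by
          have hlm' : l - m ≠ 0 := sub_ne_zero.mpr hlm
          have he : (l - m) • u₁ = x₂ - m • x₁ := by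
            rw [← hs₁, ← hs₂, hul, hwm]; module
          have hmem : x₂ - m • x₁ ∈ Submodule.span k {x₁, x₂} :=
            Submodule.sub_mem _ (Submodule.subset_span (by simp))
              (Submodule.smul_mem _ _ (Submodule.subset_span (by simp)))
          have h2 : u₁ = (l - m)⁻¹ • ((l - m) • u₁) := by
            rw [smul_smul, inv_mul_cancel₀ hlm', one_smul]
          rw [h2, he, ← hL11]
          exact Submodule.smul_mem _ _ hmem
        exact hnotboth ⟨(Submodule.ne_bot_iff _).mpr ⟨u₁, ⟨hu1L, hu₁⟩, hu₁0⟩,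
          (Submodule.ne_bot_iff _).mpr ⟨w₁, ⟨hw1L, hw₁⟩, hw₁0⟩⟩

end helpers

set_option maxHeartbeats 1000000 in
/-- with lines `L₁₁, L₁₂, L₂₁, L₂₂` configured as in the paper's
Lemma 3(ii) (intersection points `x₁, x₂` on `L₁₁ = span(x₁,x₂)`), and further
skew lines `L₃₁, L₃₂` avoiding `x₁, x₂` such that `L₁₁` does not meet both
`L₃₁` and `L₃₂`, the spaces `Q_i` of quadrics vanishing on `L_{i1} ∪ L_{i2}`
satisfy `Q₁ + Q₂ + Q₃ = S²V*`. -/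
theorem statement18
    (k V : Type) [Field k] [IsAlgClosed k] [CharZero k]
    [AddCommGroup V] [Module k V] [FiniteDimensional k V]
    (hV : finrank k V = 4)
    (L₁₁ L₁₂ L₂₁ L₂₂ L₃₁ L₃₂ : Submodule k V)
    (h11 : finrank k L₁₁ = 2) (h12 : finrank k L₁₂ = 2)
    (h21 : finrank k L₂₁ = 2) (h22 : finrank k L₂₂ = 2)
    (h31 : finrank k L₃₁ = 2) (h32 : finrank k L₃₂ = 2)
    (hskew1 : L₁₁ ⊓ L₁₂ = ⊥) (hskew2 : L₂₁ ⊓ L₂₂ = ⊥) (hskew3 : L₃₁ ⊓ L₃₂ = ⊥)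
    (x₁ x₂ : V) (hx₁ : x₁ ≠ 0) (hx₂ : x₂ ≠ 0)
    (hm1 : L₂₁ ⊓ L₁₁ = Submodule.span k {x₁})
    (hm2 : L₂₂ ⊓ L₁₁ = Submodule.span k {x₂})
    (hxx : Submodule.span k {x₁} ≠ Submodule.span k ({x₂} : Set V))
    (hn1 : L₂₁ ⊓ L₁₂ = ⊥) (hn2 : L₂₂ ⊓ L₁₂ = ⊥)
    (hx₁31 : x₁ ∉ L₃₁) (hx₁32 : x₁ ∉ L₃₂) (hx₂31 : x₂ ∉ L₃₁) (hx₂32 : x₂ ∉ L₃₂)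
    (hnotboth : ¬(L₁₁ ⊓ L₃₁ ≠ ⊥ ∧ L₁₁ ⊓ L₃₂ ≠ ⊥)) :
    vanishingQuadrics k V ((L₁₁ : Set V) ∪ (L₁₂ : Set V)) ⊔
      vanishingQuadrics k V ((L₂₁ : Set V) ∪ (L₂₂ : Set V)) ⊔
      vanishingQuadrics k V ((L₃₁ : Set V) ∪ (L₃₂ : Set V)) = ⊤ := by
  -- basic memberships
  have hx₁m : x₁ ∈ L₂₁ ⊓ L₁₁ := by
    rw [hm1]; exact Submodule.mem_span_singleton_self x₁
  have hx₂m : x₂ ∈ L₂₂ ⊓ L₁₁ := by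
    rw [hm2]; exact Submodule.mem_span_singleton_self x₂
  have hx₁11 : x₁ ∈ L₁₁ := hx₁m.2
  have hx₁21 : x₁ ∈ L₂₁ := hx₁m.1
  have hx₂11 : x₂ ∈ L₁₁ := hx₂m.2
  have hx₂22 : x₂ ∈ L₂₂ := hx₂m.1
  have hx12ind : LinearIndependent k ![x₁, x₂] := st18_pair_indep hx₁ hx₂ hxx
  have hL11 : Submodule.span k {x₁, x₂} = L₁₁ :=
    st18_span_pair_eq h11 hx₁11 hx₂11 hx12ind
  have hc12 : IsCompl L₁₁ L₁₂ := st18_isCompl hV h11 h12 hskew1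
  have htop12 : L₁₁ ⊔ L₁₂ = ⊤ := codisjoint_iff.mp hc12.codisjoint
  -- construct e₃
  obtain ⟨e₃, he₃12, he₃0, hx2e3⟩ :
      ∃ e₃, e₃ ∈ L₁₂ ∧ e₃ ≠ 0 ∧ x₂ + e₃ ∈ L₂₁ := by
    have hlt : Submodule.span k {x₁} < L₂₁ := by
      apply lt_of_le_of_ne ((Submodule.span_singleton_le_iff_mem _ _).mpr hx₁21)
      intro h
      rw [← h, finrank_span_singleton hx₁] at h21
      norm_num at h21
    obtain ⟨v, hvL, hvns⟩ := SetLike.exists_of_lt hlt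
    obtain ⟨p, hp, r, hr, hpr⟩ :=
      Submodule.mem_sup.mp (htop12 ▸ Submodule.mem_top : v ∈ L₁₁ ⊔ L₁₂)
    obtain ⟨α, β, hαβ⟩ := Submodule.mem_span_pair.mp (hL11 ▸ hp : p ∈ Submodule.span k {x₁, x₂})
    have hr0 : r ≠ 0 := by
      intro h0
      apply hvns
      rw [← hm1]
      refine ⟨hvL, ?_⟩
      rw [← hpr, h0, add_zero]; exact hp
    have hβ : β ≠ 0 := by
      intro h0
      apply hr0
      have hrmem : r ∈ L₂₁ ⊓ L₁₂ := by
        refine ⟨?_, hr⟩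
        have : r = v - α • x₁ := by
          rw [← hpr, ← hαβ, h0]; module
        rw [this]
        exact Submodule.sub_mem _ hvL (Submodule.smul_mem _ _ hx₁21)
      rw [hn1] at hrmem
      simpa using hrmem
    refine ⟨β⁻¹ • r, Submodule.smul_mem _ _ hr, smul_ne_zero (inv_ne_zero hβ) hr0, ?_⟩
    have heq : x₂ + β⁻¹ • r = β⁻¹ • (v - α • x₁) := by
      apply smul_right_injective V hβ
      show β • (x₂ + β⁻¹ • r) = β • (β⁻¹ • (v - α • x₁))
      rw [smul_add, smul_smul, mul_inv_cancel₀ hβ, one_smul, smul_smul,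
        mul_inv_cancel₀ hβ, one_smul]
      linear_combination (norm := module) hpr + hαβ
    rw [heq]
    exact Submodule.smul_mem _ _ (Submodule.sub_mem _ hvL (Submodule.smul_mem _ _ hx₁21))
  -- construct e₄
  obtain ⟨e₄, he₄12, he₄0, hx1e4⟩ :
      ∃ e₄, e₄ ∈ L₁₂ ∧ e₄ ≠ 0 ∧ x₁ + e₄ ∈ L₂₂ := by
    have hlt : Submodule.span k {x₂} < L₂₂ := by
      apply lt_of_le_of_ne ((Submodule.span_singleton_le_iff_mem _ _).mpr hx₂22)
      intro h
      rw [← h, finrank_span_singleton hx₂] at h22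
      norm_num at h22
    obtain ⟨v, hvL, hvns⟩ := SetLike.exists_of_lt hlt
    obtain ⟨p, hp, r, hr, hpr⟩ :=
      Submodule.mem_sup.mp (htop12 ▸ Submodule.mem_top : v ∈ L₁₁ ⊔ L₁₂)
    obtain ⟨α, β, hαβ⟩ := Submodule.mem_span_pair.mp (hL11 ▸ hp : p ∈ Submodule.span k {x₁, x₂})
    have hr0 : r ≠ 0 := by
      intro h0
      apply hvns
      rw [← hm2]
      refine ⟨hvL, ?_⟩
      rw [← hpr, h0, add_zero]; exact hp
    have hα : α ≠ 0 := by
      intro h0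
      apply hr0
      have hrmem : r ∈ L₂₂ ⊓ L₁₂ := by
        refine ⟨?_, hr⟩
        have : r = v - β • x₂ := by
          rw [← hpr, ← hαβ, h0]; module
        rw [this]
        exact Submodule.sub_mem _ hvL (Submodule.smul_mem _ _ hx₂22)
      rw [hn2] at hrmem
      simpa using hrmem
    refine ⟨α⁻¹ • r, Submodule.smul_mem _ _ hr, smul_ne_zero (inv_ne_zero hα) hr0, ?_⟩
    have heq : x₁ + α⁻¹ • r = α⁻¹ • (v - β • x₂) := by
      apply smul_right_injective V hα
      show α • (x₁ + α⁻¹ • r) = α • (α⁻¹ • (v - β • x₂))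
      rw [smul_add, smul_smul, mul_inv_cancel₀ hα, one_smul, smul_smul,
        mul_inv_cancel₀ hα, one_smul]
      linear_combination (norm := module) hpr + hαβ
    rw [heq]
    exact Submodule.smul_mem _ _ (Submodule.sub_mem _ hvL (Submodule.smul_mem _ _ hx₂22))
  -- independence of e₃, e₄
  have hind34 : LinearIndependent k ![e₃, e₄] := by
    rw [LinearIndependent.pair_iff]
    intro s t hst
    have hw : (-t) • x₁ + s • (x₂ + e₃) = s • x₂ + (-t) • (x₁ + e₄) := by
      linear_combination (norm := module) hst
    have hwmem : (-t) • x₁ + s • (x₂ + e₃) ∈ L₂₁ ⊓ L₂₂ := by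
      constructor
      · exact Submodule.add_mem _ (Submodule.smul_mem _ _ hx₁21)
          (Submodule.smul_mem _ _ hx2e3)
      · rw [hw]
        exact Submodule.add_mem _ (Submodule.smul_mem _ _ hx₂22)
          (Submodule.smul_mem _ _ hx1e4)
    rw [hskew2] at hwmem
    have hw0 : ((-t) • x₁ + s • x₂) + s • e₃ = 0 := by
      have := hwmem
      simp only [Submodule.mem_bot] at this
      linear_combination (norm := module) this
    obtain ⟨h1, h2⟩ := st18_split_zero hskew1
      (Submodule.add_mem _ (Submodule.smul_mem _ _ hx₁11) (Submodule.smul_mem _ _ hx₂11))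
      (Submodule.smul_mem _ _ he₃12) hw0
    have hs : s = 0 := by
      rcases smul_eq_zero.mp h2 with h | h
      · exact h
      · exact absurd h he₃0
    subst hs
    refine ⟨rfl, ?_⟩
    have : (-t) • x₁ = 0 := by simpa using h1
    rcases smul_eq_zero.mp this with h | h
    · exact neg_eq_zero.mp h
    · exact absurd h hx₁
  have hL12 : Submodule.span k {e₃, e₄} = L₁₂ :=
    st18_span_pair_eq h12 he₃12 he₄12 hind34
  -- spans of the other two lines
  have hind1 : LinearIndependent k ![x₁, x₂ + e₃] := by
    rw [LinearIndependent.pair_iff]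
    intro s t hst
    have h0 : (s • x₁ + t • x₂) + t • e₃ = 0 := by
      linear_combination (norm := module) hst
    obtain ⟨h1, h2⟩ := st18_split_zero hskew1
      (Submodule.add_mem _ (Submodule.smul_mem _ _ hx₁11) (Submodule.smul_mem _ _ hx₂11))
      (Submodule.smul_mem _ _ he₃12) h0
    have ht : t = 0 := by
      rcases smul_eq_zero.mp h2 with h | h
      · exact h
      · exact absurd h he₃0
    subst ht
    refine ⟨?_, rfl⟩
    have : s • x₁ = 0 := by simpa using h1
    rcases smul_eq_zero.mp this with h | h
    · exact h
    · exact absurd h hx₁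
  have hind2 : LinearIndependent k ![x₂, x₁ + e₄] := by
    rw [LinearIndependent.pair_iff]
    intro s t hst
    have h0 : (t • x₁ + s • x₂) + t • e₄ = 0 := by
      linear_combination (norm := module) hst
    obtain ⟨h1, h2⟩ := st18_split_zero hskew1
      (Submodule.add_mem _ (Submodule.smul_mem _ _ hx₁11) (Submodule.smul_mem _ _ hx₂11))
      (Submodule.smul_mem _ _ he₄12) h0
    have ht : t = 0 := by
      rcases smul_eq_zero.mp h2 with h | h
      · exact h
      · exact absurd h he₄0
    subst ht
    refine ⟨?_, rfl⟩
    have : s • x₂ = 0 := by simpa using h1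
    rcases smul_eq_zero.mp this with h | h
    · exact h
    · exact absurd h hx₂
  have hL21 : Submodule.span k {x₁, x₂ + e₃} = L₂₁ :=
    st18_span_pair_eq h21 hx₁21 hx2e3 hind1
  have hL22 : Submodule.span k {x₂, x₁ + e₄} = L₂₂ :=
    st18_span_pair_eq h22 hx₂22 hx1e4 hind2
  -- the adapted basis
  set v4 : Fin 4 → V := ![x₁, x₂, e₃, e₄] with hv4
  have htopv : ⊤ ≤ Submodule.span k (Set.range v4) := by
    rw [← htop12]
    apply sup_le
    · rw [← hL11, Submodule.span_le]
      rintro x (rfl | rfl)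
      · exact Submodule.subset_span ⟨0, rfl⟩
      · exact Submodule.subset_span ⟨1, rfl⟩
    · rw [← hL12, Submodule.span_le]
      rintro x (rfl | rfl)
      · exact Submodule.subset_span ⟨2, rfl⟩
      · exact Submodule.subset_span ⟨3, rfl⟩
  have hcard : Fintype.card (Fin 4) = finrank k V := by simp [hV]
  let BB := basisOfTopLeSpanOfCardEqFinrank v4 htopv hcard
  have hBB : ∀ j, BB j = v4 j := fun j =>
    congrFun (coe_basisOfTopLeSpanOfCardEqFinrank v4 htopv hcard) j
  have key : ∀ i j : Fin 4, BB.coord i (v4 j) = if j = i then 1 else 0 := by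
    intro i j
    rw [← hBB j, Basis.coord_apply, BB.repr_self]
    exact Finsupp.single_apply
  have k0 : ∀ i, BB.coord i x₁ = if (0 : Fin 4) = i then 1 else 0 := fun i => key i 0
  have k1 : ∀ i, BB.coord i x₂ = if (1 : Fin 4) = i then 1 else 0 := fun i => key i 1
  have k2 : ∀ i, BB.coord i e₃ = if (2 : Fin 4) = i then 1 else 0 := fun i => key i 2
  have k3 : ∀ i, BB.coord i e₄ = if (3 : Fin 4) = i then 1 else 0 := fun i => key i 3
  -- main goal
  rw [eq_top_iff]
  intro q _
  obtain ⟨q₃, hq₃1, hq₃2, hq₃x₁, hq₃x₂⟩ :=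
    st18_surj_on_pair hV L₁₁ L₃₁ L₃₂ h31 h32 hskew3 x₁ x₂ hxx
      hx₁31 hx₁32 hx₂31 hx₂32 hL11 hnotboth (q x₁) (q x₂)
  set q' : QuadraticForm k V := q - q₃ with hq'
  have hq'x₁ : q' x₁ = 0 := by simp [q', hq₃x₁]
  have hq'x₂ : q' x₂ = 0 := by simp [q', hq₃x₂]
  set a : k := QuadraticMap.polar q' x₁ x₂ with ha
  set b : k := -q' e₃ with hb
  set c : k := -q' e₄ with hc
  set d : k := QuadraticMap.polar q' e₃ e₄ with hd
  set Z : Fin 4 → Fin 4 → QuadraticForm k V :=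
    fun i j => QuadraticMap.linMulLin (BB.coord i) (BB.coord j) with hZ
  set qB : QuadraticForm k V :=
    a • (Z 0 1 - Z 0 2 - Z 1 3) + b • (Z 1 2 - Z 2 2) + c • (Z 0 3 - Z 3 3) + d • Z 2 3
    with hqB
  have c0 : ∀ s t u w : k, BB.coord 0 (s • x₁ + t • x₂ + u • e₃ + w • e₄) = s := by
    intro s t u w
    simp [map_add, map_smul, k0 0, k1 0, k2 0, k3 0]
  have c1 : ∀ s t u w : k, BB.coord 1 (s • x₁ + t • x₂ + u • e₃ + w • e₄) = t := by
    intro s t u w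
    simp [map_add, map_smul, k0 1, k1 1, k2 1, k3 1]
  have c2 : ∀ s t u w : k, BB.coord 2 (s • x₁ + t • x₂ + u • e₃ + w • e₄) = u := by
    intro s t u w
    simp [map_add, map_smul, k0 2, k1 2, k2 2, k3 2]
  have c3 : ∀ s t u w : k, BB.coord 3 (s • x₁ + t • x₂ + u • e₃ + w • e₄) = w := by
    intro s t u w
    simp [map_add, map_smul, k0 3, k1 3, k2 3, k3 3]
  have hqBeval : ∀ s t u w : k, qB (s • x₁ + t • x₂ + u • e₃ + w • e₄)
      = a * (s * t - s * u - t * w) + b * (t * u - u * u)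
        + c * (s * w - w * w) + d * (u * w) := by
    intro s t u w
    simp only [hqB, hZ, QuadraticMap.add_apply, QuadraticMap.smul_apply,
      QuadraticMap.sub_apply, QuadraticMap.linMulLin_apply,
      c0 s t u w, c1 s t u w, c2 s t u w, c3 s t u w, smul_eq_mul]
    try ring
  set qA : QuadraticForm k V := q' - qB with hqA
  -- qB vanishes on L₂₁ ∪ L₂₂
  have hqBQ2 : qB ∈ vanishingQuadrics k V ((L₂₁ : Set V) ∪ (L₂₂ : Set V)) := by
    apply st18_mem_vanishing
    rintro x (hx | hx)
    · obtain ⟨s, t, hst⟩ := Submodule.mem_span_pair.mp (hL21 ▸ hx)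
      have hx' : x = s • x₁ + t • x₂ + t • e₃ + (0 : k) • e₄ := by
        rw [← hst]; module
      rw [hx', hqBeval]; ring
    · obtain ⟨s, t, hst⟩ := Submodule.mem_span_pair.mp (hL22 ▸ hx)
      have hx' : x = t • x₁ + s • x₂ + (0 : k) • e₃ + t • e₄ := by
        rw [← hst]; module
      rw [hx', hqBeval]; ring
  -- qA vanishes on L₁₁ ∪ L₁₂
  have hqAQ1 : qA ∈ vanishingQuadrics k V ((L₁₁ : Set V) ∪ (L₁₂ : Set V)) := by
    apply st18_mem_vanishing
    rintro x (hx | hx)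
    · obtain ⟨s, t, hst⟩ := Submodule.mem_span_pair.mp (hL11 ▸ hx)
      have e1 : q' x = s * t * a := by
        rw [← hst, st18_quad_eval, hq'x₁, hq'x₂, ← ha]; ring
      have e2 : qB x = a * (s * t) := by
        have hx' : x = s • x₁ + t • x₂ + (0 : k) • e₃ + (0 : k) • e₄ := by
          rw [← hst]; module
        rw [hx', hqBeval]; ring
      simp only [hqA, QuadraticMap.sub_apply, e1, e2]; ring
    · obtain ⟨s, t, hst⟩ := Submodule.mem_span_pair.mp (hL12 ▸ hx)
      have e1 : q' x = s * s * (-b) + t * t * (-c) + s * t * d := by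
        rw [← hst, st18_quad_eval, ← hd]
        rw [show q' e₃ = -b by rw [hb]; ring, show q' e₄ = -c by rw [hc]; ring]
      have e2 : qB x = b * (- (s * s)) + c * (- (t * t)) + d * (s * t) := by
        have hx' : x = (0 : k) • x₁ + (0 : k) • x₂ + s • e₃ + t • e₄ := by
          rw [← hst]; module
        rw [hx', hqBeval]; ring
      simp only [hqA, QuadraticMap.sub_apply, e1, e2]; ring
  -- q₃ vanishes on L₃₁ ∪ L₃₂
  have hq₃Q3 : q₃ ∈ vanishingQuadrics k V ((L₃₁ : Set V) ∪ (L₃₂ : Set V)) := by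
    apply st18_mem_vanishing
    rintro x (hx | hx)
    · exact hq₃1 x hx
    · exact hq₃2 x hx
  have hqeq : q = qA + qB + q₃ := by
    rw [hqA, hq']; abel
  rw [hqeq]
  exact Submodule.add_mem _
    (Submodule.mem_sup_left
      (Submodule.add_mem _ (Submodule.mem_sup_left hqAQ1) (Submodule.mem_sup_right hqBQ2)))
    (Submodule.mem_sup_right hq₃Q3)
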